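/- For every p > 0 there is a constant C > 0 such that for every g ∈ SL₂(ℂ) and every log^p-continuous function u on ℙ¹, the pullback g*u = u ∘ g satisfies [g*u]_{log^p} ≤ C (1 + log^p ‖g‖) [u]_{log^p}. -/

import Mathlib

noncomputable section

def matCLM (g : Matrix (Fin 2) (Fin 2) ℂ) :
    EuclideanSpace ℂ (Fin 2) →L[ℂ] EuclideanSpace ℂ (Fin 2) :=
  LinearMap.toContinuousLinearMap (Matrix.toEuclideanLin g)

/-- Distance on `ℙ¹` via representatives. -/
def dV (v w : EuclideanSpace ℂ (Fin 2)) : ℝ :=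
  ‖v 0 * w 1 - v 1 * w 0‖ / (‖v‖ * ‖w‖)

def logStar (t : ℝ) : ℝ := 1 + |Real.log t|

namespace Stmt5Aux

lemma matCLM_apply (A : Matrix (Fin 2) (Fin 2) ℂ) (v : EuclideanSpace ℂ (Fin 2)) (i : Fin 2) :
    matCLM A v i = A i 0 * v 0 + A i 1 * v 1 := by
  simp [matCLM, Matrix.toEuclideanLin_apply, Matrix.mulVec, Fin.sum_univ_two]
  fin_cases i <;> rfl

lemma matCLM_mul (A B : Matrix (Fin 2) (Fin 2) ℂ) (v : EuclideanSpace ℂ (Fin 2)) :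
    matCLM A (matCLM B v) = matCLM (A * B) v := by
  ext i
  simp [matCLM_apply, Matrix.mul_apply, Fin.sum_univ_two]
  ring

lemma matCLM_one (v : EuclideanSpace ℂ (Fin 2)) : matCLM 1 v = v := by
  ext i
  fin_cases i <;> simp [matCLM_apply, Matrix.one_apply]

lemma norm_eq2 (v : EuclideanSpace ℂ (Fin 2)) :
    ‖v‖ = Real.sqrt (‖v 0‖ ^ 2 + ‖v 1‖ ^ 2) := by
  rw [EuclideanSpace.norm_eq, Fin.sum_univ_two]

lemma abs_apply_le_norm (v : EuclideanSpace ℂ (Fin 2)) (i : Fin 2) :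
    ‖v i‖ ≤ ‖v‖ := by
  rw [norm_eq2]
  have hi : i = 0 ∨ i = 1 := by omega
  rcases hi with h | h <;> subst h <;>
  · rw [Real.le_sqrt (norm_nonneg _)]
    nlinarith [norm_nonneg (v 0), norm_nonneg (v 1),
      sq_nonneg (‖v 0‖), sq_nonneg (‖v 1‖)]
    positivity

lemma entry_le (A : Matrix (Fin 2) (Fin 2) ℂ) (i j : Fin 2) :
    ‖A i j‖ ≤ ‖matCLM A‖ := by
  have h1 : ‖(matCLM A (EuclideanSpace.single j 1)) i‖ ≤ ‖matCLM A‖ := by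
    calc ‖(matCLM A (EuclideanSpace.single j 1)) i‖
        ≤ ‖matCLM A (EuclideanSpace.single j 1)‖ := abs_apply_le_norm _ _
      _ ≤ ‖matCLM A‖ * ‖(EuclideanSpace.single j 1 : EuclideanSpace ℂ (Fin 2))‖ :=
          (matCLM A).le_opNorm _
      _ = ‖matCLM A‖ := by rw [EuclideanSpace.norm_single]; simp
  have h2 : (matCLM A (EuclideanSpace.single j 1)) i = A i j := by
    rw [matCLM_apply]
    fin_cases j <;> simp [EuclideanSpace.single_apply]
  rwa [h2] at h1

lemma opNorm_matCLM_le (A : Matrix (Fin 2) (Fin 2) ℂ) (m : ℝ) (hm : 0 ≤ m)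
    (h : ∀ i j, ‖A i j‖ ≤ m) : ‖matCLM A‖ ≤ 4 * m := by
  apply ContinuousLinearMap.opNorm_le_bound _ (by linarith)
  intro v
  have hv0 := abs_apply_le_norm v 0
  have hv1 := abs_apply_le_norm v 1
  have hcomp : ∀ i : Fin 2, ‖(matCLM A v) i‖ ≤ 2 * m * ‖v‖ := by
    intro i
    rw [matCLM_apply]
    calc ‖A i 0 * v 0 + A i 1 * v 1‖
        ≤ ‖A i 0 * v 0‖ + ‖A i 1 * v 1‖ := norm_add_le _ _
      _ = ‖A i 0‖ * ‖v 0‖ + ‖A i 1‖ * ‖v 1‖ := by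
          rw [norm_mul, norm_mul]
      _ ≤ m * ‖v‖ + m * ‖v‖ := by
          gcongr <;> [exact h i 0; exact h i 1]
      _ = 2 * m * ‖v‖ := by ring
  rw [norm_eq2]
  have h0 := hcomp 0
  have h1 := hcomp 1
  have hnn : (0:ℝ) ≤ 2 * m * ‖v‖ := by positivity
  have hsq : ‖(matCLM A v) 0‖ ^ 2 + ‖(matCLM A v) 1‖ ^ 2
      ≤ (4 * m * ‖v‖) ^ 2 := by
    nlinarith [norm_nonneg ((matCLM A v) 0), norm_nonneg ((matCLM A v) 1)]
  calc Real.sqrt (‖(matCLM A v) 0‖ ^ 2 + ‖(matCLM A v) 1‖ ^ 2)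
      ≤ Real.sqrt ((4 * m * ‖v‖) ^ 2) := Real.sqrt_le_sqrt hsq
    _ = 4 * m * ‖v‖ := Real.sqrt_sq (by positivity)

lemma num_le (v w : EuclideanSpace ℂ (Fin 2)) :
    ‖v 0 * w 1 - v 1 * w 0‖ ≤ ‖v‖ * ‖w‖ := by
  have h1 : ‖v 0 * w 1 - v 1 * w 0‖
      ≤ ‖v 0‖ * ‖w 1‖ + ‖v 1‖ * ‖w 0‖ := by
    calc ‖v 0 * w 1 - v 1 * w 0‖
        ≤ ‖v 0 * w 1‖ + ‖v 1 * w 0‖ := by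
          exact norm_sub_le (v 0 * w 1) (v 1 * w 0)
      _ = _ := by rw [norm_mul, norm_mul]
  have hx2 : ‖v‖ ^ 2 = ‖v 0‖ ^ 2 + ‖v 1‖ ^ 2 := by
    rw [norm_eq2, Real.sq_sqrt (by positivity)]
  have hy2 : ‖w‖ ^ 2 = ‖w 0‖ ^ 2 + ‖w 1‖ ^ 2 := by
    rw [norm_eq2, Real.sq_sqrt (by positivity)]
  have hx : 0 ≤ ‖v‖ := norm_nonneg _
  have hy : 0 ≤ ‖w‖ := norm_nonneg _
  nlinarith [sq_nonneg (‖v 0‖ * ‖w 0‖ - ‖v 1‖ * ‖w 1‖),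
    norm_nonneg (v 0), norm_nonneg (v 1), norm_nonneg (w 0),
    norm_nonneg (w 1), mul_nonneg hx hy,
    sq_nonneg (‖v 0‖ * ‖w 1‖ + ‖v 1‖ * ‖w 0‖)]

lemma dV_le_one (v w : EuclideanSpace ℂ (Fin 2)) (hv : v ≠ 0) (hw : w ≠ 0) :
    dV v w ≤ 1 := by
  have hpos : 0 < ‖v‖ * ‖w‖ := mul_pos (norm_pos_iff.2 hv) (norm_pos_iff.2 hw)
  rw [dV, div_le_one hpos]
  exact num_le v w

lemma num_invar (g : Matrix.SpecialLinearGroup (Fin 2) ℂ) (v w : EuclideanSpace ℂ (Fin 2)) :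
    (matCLM (↑g) v) 0 * (matCLM (↑g) w) 1 - (matCLM (↑g) v) 1 * (matCLM (↑g) w) 0
      = v 0 * w 1 - v 1 * w 0 := by
  have hdet : Matrix.det (↑g : Matrix (Fin 2) (Fin 2) ℂ) = 1 := g.prop
  rw [Matrix.det_fin_two] at hdet
  simp only [matCLM_apply]
  linear_combination (v 0 * w 1 - v 1 * w 0) * hdet

lemma ratio_bound (p : ℝ) (hp : 0 < p) (d D Lb : ℝ) (hd : 0 < d) (hd1 : d ≤ 1)
    (hD : 0 < D) (hD1 : D ≤ 1) (hLb : 0 ≤ Lb)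
    (h : -Real.log d ≤ 2 * Lb - Real.log D) :
    logStar d ^ p ≤ (1 + 2 * Lb) ^ p * logStar D ^ p := by
  have hld : Real.log d ≤ 0 := Real.log_nonpos hd.le hd1
  have hlD : Real.log D ≤ 0 := Real.log_nonpos hD.le hD1
  have hsd : logStar d = 1 - Real.log d := by rw [logStar, abs_of_nonpos hld]; ring
  have hsD : logStar D = 1 - Real.log D := by rw [logStar, abs_of_nonpos hlD]; ring
  have hle : logStar d ≤ (1 + 2 * Lb) * logStar D := by
    rw [hsd, hsD]
    nlinarith [mul_nonneg hLb (neg_nonneg.2 hlD)]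
  have h1 : 0 ≤ logStar d := by rw [hsd]; linarith
  calc logStar d ^ p ≤ ((1 + 2 * Lb) * logStar D) ^ p :=
        Real.rpow_le_rpow h1 hle hp.le
    _ = (1 + 2 * Lb) ^ p * logStar D ^ p :=
        Real.mul_rpow (by linarith) (by rw [hsD]; linarith)

lemma lin_bound (a b : ℝ) (h0a : 0 < a) (h0b : 0 < b) (hb : b ≤ 4 * a) :
    1 + 2 * max (Real.log b) 0 ≤ 4 * (1 + max (Real.log a) 0) := by
  have h4 : Real.log 4 = 2 * Real.log 2 := by
    rw [show (4:ℝ) = 2 ^ 2 by norm_num, Real.log_pow]; norm_num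
  have hlb : Real.log b ≤ Real.log 4 + Real.log a := by
    calc Real.log b ≤ Real.log (4 * a) := Real.log_le_log h0b hb
      _ = Real.log 4 + Real.log a := Real.log_mul (by norm_num) h0a.ne'
  have h2 : Real.log 2 < 0.6931471808 := Real.log_two_lt_d9
  have h2' : 0 < Real.log 2 := Real.log_pos (by norm_num)
  have hla : Real.log a ≤ max (Real.log a) 0 := le_max_left _ _
  have hmb : max (Real.log b) 0 ≤ Real.log 4 + max (Real.log a) 0 := by
    apply max_le (by linarith) (by nlinarith [le_max_right (Real.log a) 0])
  nlinarith [le_max_right (Real.log a) 0]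

lemma pow_split (p : ℝ) (hp : 0 < p) (L : ℝ) (hL : 0 ≤ L) :
    (1 + L) ^ p ≤ (2:ℝ) ^ p * (1 + L ^ p) := by
  have hmax : 1 + L ≤ 2 * max 1 L := by
    rcases le_total L 1 with h | h
    · rw [max_eq_left h]; linarith
    · rw [max_eq_right h]; linarith
  have hmp : (max 1 L : ℝ) ^ p ≤ 1 + L ^ p := by
    rcases le_total L 1 with h | h
    · rw [max_eq_left h, Real.one_rpow]
      have := Real.rpow_nonneg hL p; linarith
    · rw [max_eq_right h]
      have := Real.rpow_nonneg hL p; linarith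
  calc (1 + L) ^ p ≤ (2 * max 1 L) ^ p :=
        Real.rpow_le_rpow (by linarith) hmax hp.le
    _ = (2:ℝ) ^ p * (max 1 L) ^ p := Real.mul_rpow (by norm_num) (by positivity)
    _ ≤ (2:ℝ) ^ p * (1 + L ^ p) := by
        have : (0:ℝ) ≤ (2:ℝ) ^ p := Real.rpow_nonneg (by norm_num) p
        nlinarith

lemma claim1 (p : ℝ) (hp : 0 < p) (a : ℝ) (h0a : 0 < a) (ha2 : 1 ≤ 2 * a ^ 2) :
    1 + (max (Real.log a) 0) ^ p ≤ (1 - (1/2:ℝ) ^ p)⁻¹ * (1 + Real.log a ^ p) := by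
  have hhalf : (1/2:ℝ) ^ p < 1 := Real.rpow_lt_one (by norm_num) (by norm_num) hp
  have hhalf0 : (0:ℝ) ≤ (1/2:ℝ) ^ p := Real.rpow_nonneg (by norm_num) p
  have hKpos : 0 < (1 - (1/2:ℝ) ^ p) := by linarith
  have hK1 : 1 ≤ (1 - (1/2:ℝ) ^ p)⁻¹ := by
    rw [le_inv_comm₀ (by norm_num) hKpos]; linarith
  rcases le_or_gt 1 a with h1 | h1
  · have hl0 : 0 ≤ Real.log a := Real.log_nonneg h1
    rw [max_eq_left hl0]
    have ht : 0 ≤ Real.log a ^ p := Real.rpow_nonneg hl0 p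
    nlinarith
  · have hl0 : Real.log a < 0 := Real.log_neg h0a h1
    rw [max_eq_right hl0.le, Real.zero_rpow hp.ne']
    have hsq : (1/2:ℝ) ≤ a ^ 2 := by linarith
    have hla : -Real.log a ≤ 1/2 := by
      have hll := Real.log_le_log (by norm_num : (0:ℝ) < 1/2) hsq
      rw [Real.log_pow] at hll
      have hl2 : Real.log (1/2) = -Real.log 2 := by
        rw [one_div, Real.log_inv]
      have h2 : Real.log 2 < 0.6931471808 := Real.log_two_lt_d9
      push_cast at hll
      nlinarith
    have habs : |Real.log a| ≤ 1/2 := by rw [abs_of_neg hl0]; exact hla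
    have h1abs : |Real.log a ^ p| ≤ (1/2:ℝ) ^ p := by
      calc |Real.log a ^ p| ≤ |Real.log a| ^ p := Real.abs_rpow_le_abs_rpow _ _
        _ ≤ (1/2:ℝ) ^ p := Real.rpow_le_rpow (abs_nonneg _) habs hp.le
    have hge : 1 - (1/2:ℝ) ^ p ≤ 1 + Real.log a ^ p := by
      have := neg_abs_le (Real.log a ^ p); linarith
    calc (1:ℝ) + 0 = (1 - (1/2:ℝ) ^ p)⁻¹ * (1 - (1/2:ℝ) ^ p) := by
          rw [inv_mul_cancel₀ hKpos.ne']; ring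
      _ ≤ (1 - (1/2:ℝ) ^ p)⁻¹ * (1 + Real.log a ^ p) := by
          apply mul_le_mul_of_nonneg_left hge (by positivity)

lemma final_bound (p : ℝ) (hp : 0 < p) (a b : ℝ) (h0a : 0 < a) (h0b : 0 < b)
    (hb : b ≤ 4 * a) (ha2 : 1 ≤ 2 * a ^ 2) :
    (1 + 2 * max (Real.log b) 0) ^ p
      ≤ ((8:ℝ) ^ p * (1 - (1/2:ℝ) ^ p)⁻¹) * (1 + Real.log a ^ p) := by
  have hLb : (0:ℝ) ≤ max (Real.log b) 0 := le_max_right _ _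
  have hLa : (0:ℝ) ≤ max (Real.log a) 0 := le_max_right _ _
  have h8 : (0:ℝ) ≤ (8:ℝ) ^ p := Real.rpow_nonneg (by norm_num) p
  have h4 : (0:ℝ) ≤ (4:ℝ) ^ p := Real.rpow_nonneg (by norm_num) p
  calc (1 + 2 * max (Real.log b) 0) ^ p
      ≤ (4 * (1 + max (Real.log a) 0)) ^ p :=
        Real.rpow_le_rpow (by linarith) (lin_bound a b h0a h0b hb) hp.le
    _ = (4:ℝ) ^ p * (1 + max (Real.log a) 0) ^ p :=
        Real.mul_rpow (by norm_num) (by linarith)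
    _ ≤ (4:ℝ) ^ p * ((2:ℝ) ^ p * (1 + (max (Real.log a) 0) ^ p)) := by
        exact mul_le_mul_of_nonneg_left (pow_split p hp _ hLa) h4
    _ = (8:ℝ) ^ p * (1 + (max (Real.log a) 0) ^ p) := by
        rw [← mul_assoc, ← Real.mul_rpow (by norm_num) (by norm_num)]
        norm_num
    _ ≤ (8:ℝ) ^ p * ((1 - (1/2:ℝ) ^ p)⁻¹ * (1 + Real.log a ^ p)) :=
        mul_le_mul_of_nonneg_left (claim1 p hp a h0a ha2) h8
    _ = ((8:ℝ) ^ p * (1 - (1/2:ℝ) ^ p)⁻¹) * (1 + Real.log a ^ p) := by ring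

end Stmt5Aux

open Stmt5Aux in
theorem stmt_5 (p : ℝ) (hp : 0 < p) :
    ∃ C > 0,
      ∀ g : Matrix.SpecialLinearGroup (Fin 2) ℂ,
        ∀ u : EuclideanSpace ℂ (Fin 2) → ℝ,
          (∀ (c : ℂ) (v : EuclideanSpace ℂ (Fin 2)), c ≠ 0 → u (c • v) = u v) →
          ∀ Cu : ℝ, 0 ≤ Cu →
            (∀ v w : EuclideanSpace ℂ (Fin 2), v ≠ 0 → w ≠ 0 → dV v w ≠ 0 →
              |u v - u w| * logStar (dV v w) ^ p ≤ Cu) →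
            ∀ v w : EuclideanSpace ℂ (Fin 2), v ≠ 0 → w ≠ 0 → dV v w ≠ 0 →
              |u (matCLM (g : Matrix (Fin 2) (Fin 2) ℂ) v) -
                  u (matCLM (g : Matrix (Fin 2) (Fin 2) ℂ) w)| *
                  logStar (dV v w) ^ p ≤
                C * (1 + Real.log ‖matCLM (g : Matrix (Fin 2) (Fin 2) ℂ)‖ ^ p) * Cu := by
  have hhalf : (1/2:ℝ) ^ p < 1 := Real.rpow_lt_one (by norm_num) (by norm_num) hp
  have hhalf0 : (0:ℝ) ≤ (1/2:ℝ) ^ p := Real.rpow_nonneg (by norm_num) p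
  have h8pos : (0:ℝ) < (8:ℝ) ^ p := Real.rpow_pos_of_pos (by norm_num) p
  refine ⟨(8:ℝ) ^ p * (1 - (1/2:ℝ) ^ p)⁻¹, mul_pos h8pos (inv_pos.2 (by linarith)), ?_⟩
  intro g u _hu Cu hCu hsemi v w hv hw hdvw
  set G : Matrix (Fin 2) (Fin 2) ℂ := (↑g : Matrix (Fin 2) (Fin 2) ℂ) with hG
  set a : ℝ := ‖matCLM G‖ with ha
  set b : ℝ := ‖matCLM (↑(g⁻¹) : Matrix (Fin 2) (Fin 2) ℂ)‖ with hbdef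
  -- g⁻¹ ∘ g = id
  have hinv : ∀ x : EuclideanSpace ℂ (Fin 2),
      matCLM (↑(g⁻¹) : Matrix (Fin 2) (Fin 2) ℂ) (matCLM G x) = x := by
    intro x
    rw [hG, matCLM_mul, ← Matrix.SpecialLinearGroup.coe_mul, inv_mul_cancel,
      Matrix.SpecialLinearGroup.coe_one, matCLM_one]
  have hGv : matCLM G v ≠ 0 := by
    intro h
    apply hv
    rw [← hinv v, h, map_zero]
  have hGw : matCLM G w ≠ 0 := by
    intro h
    apply hw
    rw [← hinv w, h, map_zero]
  have hnv : (0:ℝ) < ‖v‖ := norm_pos_iff.2 hv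
  have hnw : (0:ℝ) < ‖w‖ := norm_pos_iff.2 hw
  have hnGv : (0:ℝ) < ‖matCLM G v‖ := norm_pos_iff.2 hGv
  have hnGw : (0:ℝ) < ‖matCLM G w‖ := norm_pos_iff.2 hGw
  have hvb : ‖v‖ ≤ b * ‖matCLM G v‖ := by
    conv_lhs => rw [← hinv v]
    exact (matCLM _).le_opNorm _
  have hwb : ‖w‖ ≤ b * ‖matCLM G w‖ := by
    conv_lhs => rw [← hinv w]
    exact (matCLM _).le_opNorm _
  have h0b : (0:ℝ) < b := by nlinarith
  -- entries bound and determinant bound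
  have hentry : ∀ i j, ‖G i j‖ ≤ a := fun i j => entry_le G i j
  have ha2 : 1 ≤ 2 * a ^ 2 := by
    have hdet : Matrix.det G = 1 := g.prop
    rw [Matrix.det_fin_two] at hdet
    have h1 : (1:ℝ) = ‖G 0 0 * G 1 1 - G 0 1 * G 1 0‖ := by
      rw [hdet]; simp
    have h2 : ‖G 0 0 * G 1 1 - G 0 1 * G 1 0‖
        ≤ ‖G 0 0‖ * ‖G 1 1‖ + ‖G 0 1‖ * ‖G 1 0‖ := by
      calc ‖G 0 0 * G 1 1 - G 0 1 * G 1 0‖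
          ≤ ‖G 0 0 * G 1 1‖ + ‖G 0 1 * G 1 0‖ := by
            exact norm_sub_le (G 0 0 * G 1 1) (G 0 1 * G 1 0)
        _ = _ := by rw [norm_mul, norm_mul]
    nlinarith [hentry 0 0, hentry 1 1, hentry 0 1, hentry 1 0,
      norm_nonneg (G 0 0), norm_nonneg (G 1 1),
      norm_nonneg (G 0 1), norm_nonneg (G 1 0)]
  have h0a : (0:ℝ) < a := by
    rcases (norm_nonneg (matCLM G)).lt_or_eq with h | h
    · exact h
    · exfalso; rw [ha] at ha2; rw [← h] at ha2; norm_num at ha2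
  have hb4a : b ≤ 4 * a := by
    apply opNorm_matCLM_le _ _ h0a.le
    intro i j
    have hcoe : (↑(g⁻¹) : Matrix (Fin 2) (Fin 2) ℂ) = Matrix.adjugate G := by
      rw [Matrix.SpecialLinearGroup.coe_inv, hG]
    rw [hcoe, Matrix.adjugate_fin_two]
    fin_cases i <;> fin_cases j <;> simp [map_neg_eq_map]
    · exact hentry 1 1
    · exact hentry 0 1
    · exact hentry 1 0
    · exact hentry 0 0
  -- the numerator
  set δ : ℝ := ‖v 0 * w 1 - v 1 * w 0‖ with hδdef
  have hdVvw : dV v w = δ / (‖v‖ * ‖w‖) := by rw [dV]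
  have hδpos : 0 < δ := by
    rcases (norm_nonneg (v 0 * w 1 - v 1 * w 0)).lt_or_eq with h | h
    · exact h
    · exfalso; apply hdvw; rw [hdVvw, hδdef, ← h, zero_div]
  have hd : 0 < dV v w := by rw [hdVvw]; positivity
  have hd1 : dV v w ≤ 1 := dV_le_one v w hv hw
  have hnum := num_invar g v w
  rw [← hG] at hnum
  have hDval : dV (matCLM G v) (matCLM G w) = δ / (‖matCLM G v‖ * ‖matCLM G w‖) := by
    rw [dV, hnum, hδdef]
  have hD : 0 < dV (matCLM G v) (matCLM G w) := by rw [hDval]; positivity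
  have hD1 : dV (matCLM G v) (matCLM G w) ≤ 1 := dV_le_one _ _ hGv hGw
  -- D ≤ d * b ^ 2
  have hDd : dV (matCLM G v) (matCLM G w) ≤ dV v w * b ^ 2 := by
    rw [hDval, hdVvw, div_mul_eq_mul_div, div_le_div_iff₀ (by positivity) (by positivity)]
    nlinarith [mul_le_mul hvb hwb hnw.le (by positivity : (0:ℝ) ≤ b * ‖matCLM G v‖)]
  have hlog : -Real.log (dV v w)
      ≤ 2 * max (Real.log b) 0 - Real.log (dV (matCLM G v) (matCLM G w)) := by
    have h1 : Real.log (dV (matCLM G v) (matCLM G w)) ≤ Real.log (dV v w * b ^ 2) :=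
      Real.log_le_log hD hDd
    rw [Real.log_mul hd.ne' (pow_ne_zero 2 h0b.ne'), Real.log_pow] at h1
    have h2 : Real.log b ≤ max (Real.log b) 0 := le_max_left _ _
    push_cast at h1
    linarith
  have hLb : (0:ℝ) ≤ max (Real.log b) 0 := le_max_right _ _
  have hratio := ratio_bound p hp (dV v w) (dV (matCLM G v) (matCLM G w))
    (max (Real.log b) 0) hd hd1 hD hD1 hLb hlog
  have hsemig := hsemi (matCLM G v) (matCLM G w) hGv hGw hD.ne'
  have hfb := final_bound p hp a b h0a h0b hb4a ha2
  have hpow_nonneg : (0:ℝ) ≤ (1 + 2 * max (Real.log b) 0) ^ p :=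
    Real.rpow_nonneg (by linarith) p
  calc |u (matCLM G v) - u (matCLM G w)| * logStar (dV v w) ^ p
      ≤ |u (matCLM G v) - u (matCLM G w)| *
          ((1 + 2 * max (Real.log b) 0) ^ p * logStar (dV (matCLM G v) (matCLM G w)) ^ p) :=
        mul_le_mul_of_nonneg_left hratio (abs_nonneg _)
    _ = (1 + 2 * max (Real.log b) 0) ^ p *
          (|u (matCLM G v) - u (matCLM G w)| * logStar (dV (matCLM G v) (matCLM G w)) ^ p) := by
        ring
    _ ≤ (1 + 2 * max (Real.log b) 0) ^ p * Cu :=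
        mul_le_mul_of_nonneg_left hsemig hpow_nonneg
    _ ≤ (((8:ℝ) ^ p * (1 - (1/2:ℝ) ^ p)⁻¹) * (1 + Real.log a ^ p)) * Cu :=
        mul_le_mul_of_nonneg_right hfb hCu
    _ = (8:ℝ) ^ p * (1 - (1/2:ℝ) ^ p)⁻¹ * (1 + Real.log a ^ p) * Cu := by ring
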